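/- Fix β ∈ (0,1) and C_β ≥ 2, and let ε, ε₀ ∈ (0,1) with ε₀ ≤ ε, C_β·ε^β ≤ 1 and ε₀^{1−β} ≤ C_β − 2. For σ ∈ {0,1} let P = P_ε(σ) and let Q_σ = P_{ε₀}(σ), Q_{1−σ} = P_{ε₀}(1−σ). Then for i.i.d. samples of size n: E_{Z ~ P^n}[ log( Q_σ^n(Z) / Q_{1−σ}^n(Z) ) ] ≤ n·ε·ε₀^{1−β}, and E_{Z ~ Q_σ^n}[ log( Q_σ^n(Z) / Q_{1−σ}^n(Z) ) ] ≤ n·ε₀^{2−β}. -/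

import Mathlib

/-- The Section-5 source distribution `P_ε(σ)` of the paper, on the three-point
sample space `Ω = {(x0,1), (x1,0), (x1,1)}` encoded as `Fin 3` with
`0 ↦ (x0,1)`, `1 ↦ (x1,0)`, `2 ↦ (x1,1)`. -/
noncomputable def srcPMF (Cβ β ε : ℝ) (σ : Bool) : Fin 3 → ℝ := fun ω =>
  if ω = 0 then 1 - Cβ * ε ^ β
  else if ω = (if σ then 2 else 1) then
    Cβ * ε ^ β * (1/2 + (1/2) * Cβ⁻¹ * ε ^ (1 - β))
  else Cβ * ε ^ β * (1/2 - (1/2) * Cβ⁻¹ * ε ^ (1 - β))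

lemma srcPMF_zero (Cβ β ε : ℝ) (τ : Bool) : srcPMF Cβ β ε τ 0 = 1 - Cβ * ε ^ β := by
  simp [srcPMF]

lemma srcPMF_plus (Cβ β ε : ℝ) (τ : Bool) :
    srcPMF Cβ β ε τ (if τ then 2 else 1)
      = Cβ * ε ^ β * (1/2 + (1/2) * Cβ⁻¹ * ε ^ (1 - β)) := by
  cases τ <;>
    simp [srcPMF, show (1:Fin 3) ≠ 0 by decide, show (2:Fin 3) ≠ 0 by decide]

lemma srcPMF_minus (Cβ β ε : ℝ) (τ : Bool) :
    srcPMF Cβ β ε τ (if τ then 1 else 2)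
      = Cβ * ε ^ β * (1/2 - (1/2) * Cβ⁻¹ * ε ^ (1 - β)) := by
  cases τ <;>
    simp [srcPMF, show (1:Fin 3) ≠ 0 by decide, show (2:Fin 3) ≠ 0 by decide,
      show (1:Fin 3) ≠ 2 by decide, show (2:Fin 3) ≠ 1 by decide]

theorem helper (β Cβ ε' ε₀ : ℝ) (hβ : β ∈ Set.Ioo (0:ℝ) 1) (hC : 2 ≤ Cβ)
    (hε' : ε' ∈ Set.Ioo (0:ℝ) 1) (hε₀ : ε₀ ∈ Set.Ioo (0:ℝ) 1) (hle : ε₀ ≤ ε')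
    (hCε' : Cβ * ε' ^ β ≤ 1) (hgap : ε₀ ^ (1-β) ≤ Cβ - 2)
    (σ : Bool) (n : ℕ) :
    ∑ z : Fin n → Fin 3,
        (∏ i, srcPMF Cβ β ε' σ (z i)) *
          Real.log ((∏ i, srcPMF Cβ β ε₀ σ (z i)) /
            (∏ i, srcPMF Cβ β ε₀ (!σ) (z i)))
      ≤ (n : ℝ) * ε' * ε₀ ^ (1-β) := by
  obtain ⟨hβ0, hβ1⟩ := hβ
  obtain ⟨hε'0, hε'1⟩ := hε'
  obtain ⟨hε₀0, hε₀1⟩ := hε₀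
  have hC0 : (0:ℝ) < Cβ := lt_of_lt_of_le two_pos hC
  set p := srcPMF Cβ β ε' σ with hp
  set q := srcPMF Cβ β ε₀ σ with hq
  set q' := srcPMF Cβ β ε₀ (!σ) with hq'
  set L : Fin 3 → ℝ := fun ω => Real.log (q ω / q' ω) with hL
  set s := ε₀ ^ (1-β) with hsdef
  have hs0 : 0 < s := Real.rpow_pos_of_pos hε₀0 _
  set t := Cβ⁻¹ * s with htdef
  have ht0 : 0 < t := mul_pos (inv_pos.2 hC0) hs0
  have hCt : Cβ * t = s := by rw [htdef, ← mul_assoc, mul_inv_cancel₀ hC0.ne', one_mul]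
  have ht1 : t < 1 := by nlinarith
  have hA₀ : 0 < Cβ * ε₀ ^ β := mul_pos hC0 (Real.rpow_pos_of_pos hε₀0 _)
  have hA' : 0 < Cβ * ε' ^ β := mul_pos hC0 (Real.rpow_pos_of_pos hε'0 _)
  have hmono : Cβ * ε₀ ^ β ≤ Cβ * ε' ^ β :=
    mul_le_mul_of_nonneg_left (Real.rpow_le_rpow hε₀0.le hle hβ0.le) hC0.le
  have hteq : (1/2 : ℝ) * Cβ⁻¹ * ε₀ ^ (1-β) = (1/2) * t := by rw [htdef]; ring
  have hhalfp : 0 < 1/2 + (1/2) * Cβ⁻¹ * ε₀ ^ (1-β) := by rw [hteq]; linarith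
  have hhalfm : 0 < 1/2 - (1/2) * Cβ⁻¹ * ε₀ ^ (1-β) := by rw [hteq]; linarith
  have hq12 : ∀ τ : Bool, ∀ ω : Fin 3, ω ≠ 0 → 0 < srcPMF Cβ β ε₀ τ ω := by
    intro τ ω hω
    have h1 : ω = (if τ then 2 else 1) ∨ ω = (if τ then 1 else 2) := by
      cases τ <;> fin_cases ω <;> simp_all
    rcases h1 with h | h <;> rw [h]
    · rw [srcPMF_plus]; exact mul_pos hA₀ hhalfp
    · rw [srcPMF_minus]; exact mul_pos hA₀ hhalfm
  have htrans : ∀ ω : Fin 3, p ω ≠ 0 → q ω ≠ 0 ∧ q' ω ≠ 0 := by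
    intro ω hω
    by_cases h0 : ω = 0
    · subst h0
      have hp0 : p 0 = 1 - Cβ * ε' ^ β := srcPMF_zero ..
      have hlt' : Cβ * ε' ^ β < 1 :=
        lt_of_le_of_ne hCε' (by intro h; apply hω; rw [hp0, h]; ring)
      have hlt : Cβ * ε₀ ^ β < 1 := lt_of_le_of_lt hmono hlt'
      have hq0 : q 0 = 1 - Cβ * ε₀ ^ β := srcPMF_zero ..
      have hq'0 : q' 0 = 1 - Cβ * ε₀ ^ β := srcPMF_zero ..
      exact ⟨by rw [hq0]; intro h; linarith [sub_eq_zero.mp h],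
             by rw [hq'0]; intro h; linarith [sub_eq_zero.mp h]⟩
    · exact ⟨(hq12 σ ω h0).ne', (hq12 (!σ) ω h0).ne'⟩
  have hsump : ∑ ω : Fin 3, p ω = 1 := by
    cases σ <;>
      simp only [hp, Fin.sum_univ_three, srcPMF_zero,
        show srcPMF Cβ β ε' false 1 = Cβ * ε' ^ β * (1/2 + (1/2) * Cβ⁻¹ * ε' ^ (1-β)) from
          srcPMF_plus Cβ β ε' false,
        show srcPMF Cβ β ε' false 2 = Cβ * ε' ^ β * (1/2 - (1/2) * Cβ⁻¹ * ε' ^ (1-β)) from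
          srcPMF_minus Cβ β ε' false,
        show srcPMF Cβ β ε' true 2 = Cβ * ε' ^ β * (1/2 + (1/2) * Cβ⁻¹ * ε' ^ (1-β)) from
          srcPMF_plus Cβ β ε' true,
        show srcPMF Cβ β ε' true 1 = Cβ * ε' ^ β * (1/2 - (1/2) * Cβ⁻¹ * ε' ^ (1-β)) from
          srcPMF_minus Cβ β ε' true] <;> ring
  have key : ∀ z : Fin n → Fin 3,
      (∏ i, p (z i)) * Real.log ((∏ i, q (z i)) / (∏ i, q' (z i)))
        = (∏ i, p (z i)) * ∑ i, L (z i) := by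
    intro z
    by_cases hz : ∀ i, p (z i) ≠ 0
    · congr 1
      have hqz : ∀ i ∈ Finset.univ, q (z i) ≠ 0 := fun i _ => (htrans _ (hz i)).1
      have hq'z : ∀ i ∈ Finset.univ, q' (z i) ≠ 0 := fun i _ => (htrans _ (hz i)).2
      rw [Real.log_div (Finset.prod_ne_zero_iff.2 hqz) (Finset.prod_ne_zero_iff.2 hq'z),
        Real.log_prod hqz, Real.log_prod hq'z, ← Finset.sum_sub_distrib]
      exact Finset.sum_congr rfl fun i hi =>
        (Real.log_div (hqz i hi) (hq'z i hi)).symm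
    · push_neg at hz
      obtain ⟨i, hi⟩ := hz
      have : ∏ i, p (z i) = 0 := Finset.prod_eq_zero (Finset.mem_univ i) hi
      simp [this]
  set SL := ∑ ω : Fin 3, p ω * L ω with hSL
  have inner : ∀ i : Fin n,
      (∑ z : Fin n → Fin 3, (∏ j, p (z j)) * L (z i)) = SL := by
    intro i
    have h1 : ∀ z : Fin n → Fin 3,
        (∏ j, p (z j)) * L (z i)
          = ∏ j, (if j = i then p (z j) * L (z j) else p (z j)) := by
      intro z
      calc (∏ j, p (z j)) * L (z i)
          = (∏ j, p (z j)) * ∏ j, (if j = i then L (z j) else 1) := by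
            rw [Finset.prod_ite_eq' Finset.univ i (fun j => L (z j))]
            simp
        _ = ∏ j, (p (z j) * if j = i then L (z j) else 1) := by
            rw [Finset.prod_mul_distrib]
        _ = ∏ j, (if j = i then p (z j) * L (z j) else p (z j)) := by
            refine Finset.prod_congr rfl fun j _ => ?_
            by_cases h : j = i <;> simp [h]
    calc (∑ z : Fin n → Fin 3, (∏ j, p (z j)) * L (z i))
        = ∑ z ∈ Fintype.piFinset (fun _ : Fin n => (Finset.univ : Finset (Fin 3))),
            ∏ j, (if j = i then p (z j) * L (z j) else p (z j)) := by
          rw [Fintype.piFinset_univ]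
          exact Finset.sum_congr rfl fun z _ => h1 z
      _ = ∏ j : Fin n, ∑ ω : Fin 3, (if j = i then p ω * L ω else p ω) := by
          rw [Finset.prod_univ_sum]
      _ = ∏ j : Fin n, (if j = i then SL else 1) := by
          refine Finset.prod_congr rfl fun j _ => ?_
          by_cases hji : j = i <;> simp [hji, hsump, hSL]
      _ = SL := by simp
  have main_eq : ∑ z : Fin n → Fin 3,
      (∏ i, p (z i)) * Real.log ((∏ i, q (z i)) / (∏ i, q' (z i))) = n * SL := by
    rw [Finset.sum_congr rfl fun z _ => key z]
    have h2 : ∀ z : Fin n → Fin 3, (∏ i, p (z i)) * ∑ i, L (z i)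
        = ∑ i, (∏ j, p (z j)) * L (z i) := fun z => Finset.mul_sum _ _ _
    rw [Finset.sum_congr rfl fun z _ => h2 z, Finset.sum_comm]
    rw [Finset.sum_congr rfl fun i _ => inner i]
    simp [mul_comm]
  rw [main_eq]
  have hL0 : L 0 = 0 := by
    have h1 : q 0 = 1 - Cβ * ε₀ ^ β := srcPMF_zero ..
    have h2 : q' 0 = 1 - Cβ * ε₀ ^ β := srcPMF_zero ..
    show Real.log (q 0 / q' 0) = 0
    by_cases hc : (1 : ℝ) - Cβ * ε₀ ^ β = 0
    · simp [h1, h2, hc]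
    · simp [h1, h2, div_self hc]
  set ℓ := Real.log ((1/2 + (1/2) * Cβ⁻¹ * ε₀ ^ (1-β)) / (1/2 - (1/2) * Cβ⁻¹ * ε₀ ^ (1-β)))
    with hℓ
  have hA : (Cβ * ε₀ ^ β) ≠ 0 := hA₀.ne'
  have hLplus : L (if σ then 2 else 1) = ℓ := by
    show Real.log (q (if σ then 2 else 1) / q' (if σ then 2 else 1)) = ℓ
    have e1 : q (if σ then 2 else 1)
        = Cβ * ε₀ ^ β * (1/2 + (1/2) * Cβ⁻¹ * ε₀ ^ (1-β)) := srcPMF_plus ..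
    have e2 : q' (if σ then 2 else 1)
        = Cβ * ε₀ ^ β * (1/2 - (1/2) * Cβ⁻¹ * ε₀ ^ (1-β)) := by
      have : (if σ then 2 else 1 : Fin 3) = (if !σ then 1 else 2) := by cases σ <;> rfl
      rw [hq', this]; exact srcPMF_minus ..
    rw [e1, e2, mul_div_mul_left _ _ hA]
  have hLminus : L (if σ then 1 else 2) = -ℓ := by
    show Real.log (q (if σ then 1 else 2) / q' (if σ then 1 else 2)) = -ℓ
    have e1 : q (if σ then 1 else 2)
        = Cβ * ε₀ ^ β * (1/2 - (1/2) * Cβ⁻¹ * ε₀ ^ (1-β)) := srcPMF_minus ..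
    have e2 : q' (if σ then 1 else 2)
        = Cβ * ε₀ ^ β * (1/2 + (1/2) * Cβ⁻¹ * ε₀ ^ (1-β)) := by
      have : (if σ then 1 else 2 : Fin 3) = (if !σ then 2 else 1) := by cases σ <;> rfl
      rw [hq', this]; exact srcPMF_plus ..
    rw [e1, e2, mul_div_mul_left _ _ hA, hℓ, ← Real.log_inv, inv_div]
  have hdiff : Cβ * ε' ^ β * (1/2 + (1/2) * Cβ⁻¹ * ε' ^ (1-β))
      - Cβ * ε' ^ β * (1/2 - (1/2) * Cβ⁻¹ * ε' ^ (1-β)) = ε' := by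
    have h1 : ε' ^ β * ε' ^ (1-β) = ε' := by
      rw [← Real.rpow_add hε'0]; norm_num
    have h2 : Cβ * Cβ⁻¹ = 1 := mul_inv_cancel₀ hC0.ne'
    calc Cβ * ε' ^ β * (1/2 + (1/2) * Cβ⁻¹ * ε' ^ (1-β))
          - Cβ * ε' ^ β * (1/2 - (1/2) * Cβ⁻¹ * ε' ^ (1-β))
        = (Cβ * Cβ⁻¹) * (ε' ^ β * ε' ^ (1-β)) := by ring
      _ = ε' := by rw [h2, h1, one_mul]
  have hSLval : SL = ε' * ℓ := by
    have hpplus : p (if σ then 2 else 1)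
        = Cβ * ε' ^ β * (1/2 + (1/2) * Cβ⁻¹ * ε' ^ (1-β)) := srcPMF_plus ..
    have hpminus : p (if σ then 1 else 2)
        = Cβ * ε' ^ β * (1/2 - (1/2) * Cβ⁻¹ * ε' ^ (1-β)) := srcPMF_minus ..
    cases σ <;> norm_num at hpplus hpminus hLplus hLminus
    · rw [hSL, Fin.sum_univ_three, hL0, hLplus, hLminus, hpplus, hpminus]
      linear_combination ℓ * hdiff
    · rw [hSL, Fin.sum_univ_three, hL0, hLminus, hLplus, hpplus, hpminus]
      linear_combination ℓ * hdiff
  have hℓle : ℓ ≤ s := by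
    have harg : 0 < (1/2 + (1/2) * Cβ⁻¹ * ε₀ ^ (1-β)) / (1/2 - (1/2) * Cβ⁻¹ * ε₀ ^ (1-β)) :=
      div_pos hhalfp hhalfm
    have h1 : ℓ ≤ (1/2 + (1/2) * Cβ⁻¹ * ε₀ ^ (1-β)) / (1/2 - (1/2) * Cβ⁻¹ * ε₀ ^ (1-β)) - 1 :=
      Real.log_le_sub_one_of_pos harg
    rw [hteq] at h1 hhalfm hhalfp
    have h2 : (1/2 + (1/2) * t) / (1/2 - (1/2) * t) - 1 ≤ s := by
      rw [div_sub_one hhalfm.ne', div_le_iff₀ hhalfm]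
      nlinarith [hCt, hgap, ht0, hs0]
    linarith
  rw [hSLval]
  have hstep : ε' * ℓ ≤ ε' * s := mul_le_mul_of_nonneg_left hℓle hε'0.le
  calc (n:ℝ) * (ε' * ℓ) ≤ (n:ℝ) * (ε' * s) :=
        mul_le_mul_of_nonneg_left hstep (Nat.cast_nonneg n)
    _ = (n:ℝ) * ε' * s := by ring


/-- display (16) in the proof of Theorem 5.2 of the paper.
With `P = P_ε(σ)`, `Q_σ = P_{ε₀}(σ)` and `Q_{1−σ} = P_{ε₀}(1−σ)`, for i.i.d.
samples of size `n`:
`E_{Z~P^n}[log(Q_σ^n(Z)/Q_{1−σ}^n(Z))] ≤ n·ε·ε₀^{1−β}` and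
`E_{Z~Q_σ^n}[log(Q_σ^n(Z)/Q_{1−σ}^n(Z))] ≤ n·ε₀^{2−β}`. -/
theorem stmt11 (β Cβ ε ε₀ : ℝ) (hβ : β ∈ Set.Ioo (0:ℝ) 1) (hC : 2 ≤ Cβ)
    (hε : ε ∈ Set.Ioo (0:ℝ) 1) (hε₀ : ε₀ ∈ Set.Ioo (0:ℝ) 1) (hle : ε₀ ≤ ε)
    (hCε : Cβ * ε ^ β ≤ 1) (hgap : ε₀ ^ (1-β) ≤ Cβ - 2)
    (σ : Bool) (n : ℕ) :
    (∑ z : Fin n → Fin 3,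
        (∏ i, srcPMF Cβ β ε σ (z i)) *
          Real.log ((∏ i, srcPMF Cβ β ε₀ σ (z i)) /
            (∏ i, srcPMF Cβ β ε₀ (!σ) (z i)))
      ≤ (n : ℝ) * ε * ε₀ ^ (1-β)) ∧
    (∑ z : Fin n → Fin 3,
        (∏ i, srcPMF Cβ β ε₀ σ (z i)) *
          Real.log ((∏ i, srcPMF Cβ β ε₀ σ (z i)) /
            (∏ i, srcPMF Cβ β ε₀ (!σ) (z i)))
      ≤ (n : ℝ) * ε₀ ^ (2-β)) := by
  have hC0 : (0:ℝ) < Cβ := lt_of_lt_of_le two_pos hC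
  have hCε₀ : Cβ * ε₀ ^ β ≤ 1 :=
    le_trans (mul_le_mul_of_nonneg_left
      (Real.rpow_le_rpow hε₀.1.le hle hβ.1.le) hC0.le) hCε
  constructor
  · exact helper β Cβ ε ε₀ hβ hC hε hε₀ hle hCε hgap σ n
  · have h := helper β Cβ ε₀ ε₀ hβ hC hε₀ hε₀ le_rfl hCε₀ hgap σ n
    have hpow : (n : ℝ) * ε₀ * ε₀ ^ (1-β) = (n : ℝ) * ε₀ ^ (2-β) := by
      have : ε₀ ^ (2-β) = ε₀ ^ (1:ℝ) * ε₀ ^ (1-β) := by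
        rw [← Real.rpow_add hε₀.1]; ring_nf
      rw [this, Real.rpow_one]; ring
    rw [← hpow]
    exact h
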